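/- Let A=(S,R) be an argumentation network (S possibly infinite) and let λ be a complete extension of A. Define a two-world constant-domain predicate G3 model M with domain S, with R interpreted by the attack relation of A, and with the predicate In interpreted by ι_t = {x : λ(x)=in} and ι_s = {x : λ(x)=in or λ(x)=und}. Then t forces each of (A1),(A2),(B1),(B2) in M. -/
import Mathlib


/-- The three Caminada labels. -/
inductive Label where
  | in_ : Label
  | out : Label
  | und : Label
deriving DecidableEq

/-- Caminada labelling / complete extension of the network `(S, R)`. -/
def IsCompleteExt {S : Type} (R : S → S → Prop) (l : S → Label) : Prop :=
  (∀ x, l x = .in_ ↔ ∀ y, R y x → l y = .out) ∧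
  (∀ x, l x = .out ↔ ∃ y, R y x ∧ l y = .in_) ∧
  (∀ x, l x = .und ↔ ((∀ y, R y x → l y ≠ .in_) ∧ ∃ y, R y x ∧ l y = .und))

/- Two-world constant-domain predicate G3 model: worlds are `Bool` with
`false = t < true = s`; `R` is interpreted world-independently; the unary
predicate `In` is interpreted by `iota w`, with `iota false ⊆ iota true`
(persistence).  Below, the intuitionistic forcing of each axiom is unfolded:
`∀` and `→` and `¬` quantify over all worlds `≥` the current one, `n` holds
exactly at world `s = true`. -/

/-- `w ⊨ (A1)`, i.e. `∀x[In(x) → (n ∨ ∀y(yRx → ¬In(y)))]` at world `w`. -/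
def fA1 {S : Type} (R : S → S → Prop) (iota : Bool → S → Prop) (w : Bool) : Prop :=
  ∀ b, w ≤ b → ∀ x : S, ∀ c, b ≤ c → iota c x →
    (c = true ∨ ∀ e, c ≤ e → ∀ y : S, ∀ f, e ≤ f → R y x → ∀ g, f ≤ g → ¬ iota g y)

/-- `w ⊨ (A2)`, i.e. `∀x[∀y(yRx → ¬In(y)) → (n ∨ In(x))]` at world `w`. -/
def fA2 {S : Type} (R : S → S → Prop) (iota : Bool → S → Prop) (w : Bool) : Prop :=
  ∀ b, w ≤ b → ∀ x : S, ∀ c, b ≤ c →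
    (∀ e, c ≤ e → ∀ y : S, ∀ f, e ≤ f → R y x → ∀ g, f ≤ g → ¬ iota g y) →
    (c = true ∨ iota c x)

/-- `w ⊨ (B1)`, i.e. `∀x[¬In(x) → (n ∨ ∃y(yRx ∧ In(y)))]` at world `w`. -/
def fB1 {S : Type} (R : S → S → Prop) (iota : Bool → S → Prop) (w : Bool) : Prop :=
  ∀ b, w ≤ b → ∀ x : S, ∀ c, b ≤ c → (∀ d, c ≤ d → ¬ iota d x) →
    (c = true ∨ ∃ y : S, R y x ∧ iota c y)

/-- `w ⊨ (B2)`, i.e. `∀x[∃y(yRx ∧ In(y)) → (n ∨ ¬In(x))]` at world `w`. -/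
def fB2 {S : Type} (R : S → S → Prop) (iota : Bool → S → Prop) (w : Bool) : Prop :=
  ∀ b, w ≤ b → ∀ x : S, ∀ c, b ≤ c → (∃ y : S, R y x ∧ iota c y) →
    (c = true ∨ ∀ d, c ≤ d → ¬ iota d x)

/-- If `λ` is a complete extension of `(S,R)` and `M` is the two-world
constant-domain predicate G3 model with domain `S`, relation `R`, and `In`
interpreted by `ι_t = {x : λ(x)=in}`, `ι_s = {x : λ(x)=in or λ(x)=und}`, then
`t` forces each of (A1),(A2),(B1),(B2) in `M`. -/
theorem stmt11 {S : Type} [Nonempty S] (R : S → S → Prop) (l : S → Label)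
    (hl : IsCompleteExt R l)
    (iota : Bool → S → Prop)
    (hiota_t : ∀ x, iota false x ↔ l x = .in_)
    (hiota_s : ∀ x, iota true x ↔ (l x = .in_ ∨ l x = .und)) :
    fA1 R iota false ∧ fA2 R iota false ∧ fB1 R iota false ∧ fB2 R iota false := by
  obtain ⟨h1, h2, h3⟩ := hl
  have hiota : ∀ g x, iota g x → l x = .in_ ∨ l x = .und := by
    intro g x h
    cases g
    · exact Or.inl ((hiota_t x).mp h)
    · exact (hiota_s x).mp h
  refine ⟨?_, ?_, ?_, ?_⟩
  · intro b _ x c _ hc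
    cases c
    · right
      intro e _ y f _ hR g _ hg
      have hxin : l x = .in_ := (hiota_t x).mp hc
      have hyout : l y = .out := (h1 x).mp hxin y hR
      rcases hiota g y hg with h | h <;> exact Label.noConfusion (hyout.symm.trans h)
    · exact Or.inl rfl
  · intro b _ x c _ h
    cases c
    · right
      rw [hiota_t]
      apply (h1 x).mpr
      intro y hR
      have := h false (by simp) y false (by simp) hR true (by simp)
      rw [hiota_s] at this
      cases hx : l y with
      | in_ => exact (this (Or.inl hx)).elim
      | out => rfl
      | und => exact (this (Or.inr hx)).elim
    · exact Or.inl rfl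
  · intro b _ x c _ h
    cases c
    · right
      have := h true (by simp)
      rw [hiota_s] at this
      have hxout : l x = .out := by
        cases hx : l x with
        | in_ => exact (this (Or.inl hx)).elim
        | out => rfl
        | und => exact (this (Or.inr hx)).elim
      obtain ⟨y, hR, hy⟩ := (h2 x).mp hxout
      exact ⟨y, hR, (hiota_t y).mpr hy⟩
    · exact Or.inl rfl
  · intro b _ x c _ h
    cases c
    · right
      obtain ⟨y, hR, hy⟩ := h
      have hxout : l x = .out := (h2 x).mpr ⟨y, hR, (hiota_t y).mp hy⟩
      intro d _ hd
      rcases hiota d x hd with h | h <;> exact Label.noConfusion (hxout.symm.trans h)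
    · exact Or.inl rfl
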